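/- Let Z be a measurable space, D a probability measure on Z, m ≥ 1, a < b real numbers, and 𝒢 a nonempty countable class of measurable functions Z → [a, b]. For every t > 0, the probability over S = (z₁,…,z_m) drawn i.i.d. from D that |R_D(𝒢) − R̂_S(𝒢)| ≥ t is at most 2·exp(−2mt²/(b−a)²). -/

import Mathlib

open Finset MeasureTheory

/-- The empirical Rademacher complexity of a set `A ⊆ ℝ^m`. -/
noncomputable def radComp (m : ℕ) (A : Set (Fin m → ℝ)) : ℝ :=
  ((2 : ℝ) ^ m)⁻¹ * ∑ ε : Fin m → Bool,
    sSup ((fun v => (1 / (m : ℝ)) * ∑ i, (if ε i then (1 : ℝ) else -1) * v i) '' A)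

/-- Empirical Rademacher complexity of a function class `G` on the sample `S`. -/
noncomputable def empRad {Z : Type*} (m : ℕ) (S : Fin m → Z) (G : Set (Z → ℝ)) : ℝ :=
  radComp m ((fun g => fun i => g (S i)) '' G)

/-- Expected Rademacher complexity `R_D(G) = E_{S ∼ D^m}[R̂_S(G)]`. -/
noncomputable def expRad {Z : Type*} [MeasurableSpace Z] (m : ℕ) (D : Measure Z)
    (G : Set (Z → ℝ)) : ℝ :=
  ∫ S, empRad m S G ∂(Measure.pi fun _ : Fin m => D)


section Aux

lemma key_ineq (θ h : ℝ) (h0 : 0 ≤ θ) (h1 : θ ≤ 1) :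
    θ * Real.exp h + (1 - θ) ≤ Real.exp (θ * h + h ^ 2 / 8) := by
  set u : ℝ → ℝ := fun x => θ * Real.exp x + (1 - θ) with hu_def
  have hu : ∀ x, 0 < u x := by
    intro x
    have he := Real.exp_pos x
    rcases lt_or_eq_of_le h1 with h1' | h1'
    · have : 0 ≤ θ * Real.exp x := by positivity
      simp only [hu_def]; nlinarith
    · simp only [hu_def, h1']; nlinarith
  -- φ' = ψ
  set ψ : ℝ → ℝ := fun x => θ + x / 4 - θ * Real.exp x / u x with hψ_def
  set φ : ℝ → ℝ := fun x => θ * x + x ^ 2 / 8 - Real.log (u x) with hφ_def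
  have hdu : ∀ x, HasDerivAt u (θ * Real.exp x) x := by
    intro x
    exact ((Real.hasDerivAt_exp x).const_mul θ).add_const (1 - θ)
  have hdφ : ∀ x, HasDerivAt φ (ψ x) x := by
    intro x
    have hlog : HasDerivAt (fun y => Real.log (u y)) (θ * Real.exp x / u x) x :=
      (hdu x).log (hu x).ne'
    have h1' : HasDerivAt (fun y : ℝ => θ * y + y ^ 2 / 8) (θ + x * 2 / 8) x := by
      have := ((hasDerivAt_id x).const_mul θ).add
        (((hasDerivAt_pow 2 x)).div_const 8)
      exact this.congr_deriv (by norm_num; ring)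
    have := h1'.sub hlog
    refine this.congr_deriv ?_
    simp only [hψ_def]; ring
  have hdψ : ∀ x, HasDerivAt ψ (1 / 4 - θ * Real.exp x * (1 - θ) / (u x) ^ 2) x := by
    intro x
    have hq : HasDerivAt (fun y => θ * Real.exp y / u y)
        ((θ * Real.exp x * u x - θ * Real.exp x * (θ * Real.exp x)) / (u x) ^ 2) x :=
      ((Real.hasDerivAt_exp x).const_mul θ).div (hdu x) (hu x).ne'
    have h1' : HasDerivAt (fun y : ℝ => θ + y / 4) (1 / 4) x := by
      simpa using ((hasDerivAt_id x).div_const 4).const_add θ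
    have := h1'.sub hq
    refine this.congr_deriv ?_
    have : θ * Real.exp x * u x - θ * Real.exp x * (θ * Real.exp x)
        = θ * Real.exp x * (1 - θ) := by simp only [hu_def]; ring
    rw [this]
  have hψ'' : ∀ x, 0 ≤ 1 / 4 - θ * Real.exp x * (1 - θ) / (u x) ^ 2 := by
    intro x
    rw [sub_nonneg, div_le_iff₀ (pow_pos (hu x) 2)]
    have : (u x) ^ 2 - 4 * (θ * Real.exp x * (1 - θ)) = (θ * Real.exp x - (1 - θ)) ^ 2 := by
      simp only [hu_def]; ring
    nlinarith [sq_nonneg (θ * Real.exp x - (1 - θ))]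
  have hψmono : Monotone ψ :=
    monotone_of_deriv_nonneg (fun x => (hdψ x).differentiableAt)
      (fun x => (hdψ x).deriv ▸ hψ'' x)
  have hψ0 : ψ 0 = 0 := by simp [hψ_def, hu_def]
  have hφ0 : φ 0 = 0 := by simp [hφ_def, hu_def]
  have hφnonneg : ∀ x, 0 ≤ φ x := by
    intro x
    rcases le_total 0 x with hx | hx
    · have hmono : MonotoneOn φ (Set.Ici 0) := by
        apply monotoneOn_of_deriv_nonneg (convex_Ici 0)
          (fun y _ => (hdφ y).continuousAt.continuousWithinAt) ?_ ?_
        · intro y hy; exact (hdφ y).differentiableAt.differentiableWithinAt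
        · intro y hy
          rw [(hdφ y).deriv]
          rw [interior_Ici] at hy
          calc (0:ℝ) = ψ 0 := hψ0.symm
            _ ≤ ψ y := hψmono (le_of_lt hy)
      have := hmono (Set.self_mem_Ici) (Set.mem_Ici.2 hx) hx
      linarith [hφ0 ▸ this]
    · have hanti : AntitoneOn φ (Set.Iic 0) := by
        apply antitoneOn_of_deriv_nonpos (convex_Iic 0)
          (fun y _ => (hdφ y).continuousAt.continuousWithinAt) ?_ ?_
        · intro y hy; exact (hdφ y).differentiableAt.differentiableWithinAt
        · intro y hy
          rw [(hdφ y).deriv]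
          rw [interior_Iic] at hy
          calc ψ y ≤ ψ 0 := hψmono (le_of_lt hy)
            _ = 0 := hψ0
      have := hanti (Set.mem_Iic.2 hx) (Set.self_mem_Iic) hx
      linarith [hφ0 ▸ this]
  have := hφnonneg h
  have hle : Real.log (u h) ≤ θ * h + h ^ 2 / 8 := by simp only [hφ_def] at this; linarith
  have := Real.exp_le_exp.2 hle
  rw [Real.exp_log (hu h)] at this
  exact this

variable {Ω : Type*} [MeasurableSpace Ω]

lemma nonempty_of_prob (ν : Measure Ω) [IsProbabilityMeasure ν] : Nonempty Ω := by
  by_contra hc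
  rw [not_nonempty_iff] at hc
  have h1 : ν Set.univ = 1 := measure_univ
  rw [Set.univ_eq_empty_iff.2 hc, measure_empty] at h1
  exact one_ne_zero h1.symm

lemma integrable_of_bdd {ν : Measure Ω} [IsProbabilityMeasure ν] {X : Ω → ℝ} {M : ℝ}
    (hX : Measurable X) (hM : ∀ ω, |X ω| ≤ M) : Integrable X ν := by
  apply Integrable.mono' (integrable_const M) hX.aestronglyMeasurable
  exact Filter.Eventually.of_forall (fun ω => by simpa using hM ω)

lemma hoeffding_lemma (ν : Measure Ω) [IsProbabilityMeasure ν] (X : Ω → ℝ)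
    (hX : Measurable X) (p q : ℝ) (hb : ∀ ω, X ω ∈ Set.Icc p q) (L : ℝ) :
    ∫ ω, Real.exp (L * X ω) ∂ν ≤ Real.exp (L * ∫ ω, X ω ∂ν + L ^ 2 * (q - p) ^ 2 / 8) := by
  obtain ⟨ω₀⟩ := nonempty_of_prob ν
  have hpq : p ≤ q := le_trans (hb ω₀).1 (hb ω₀).2
  have hXb : ∀ ω, |X ω| ≤ max |p| |q| := fun ω => abs_le_max_abs_abs (hb ω).1 (hb ω).2
  have hXint : Integrable X ν := integrable_of_bdd hX hXb
  have hEint : Integrable (fun ω => Real.exp (L * X ω)) ν := by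
    apply integrable_of_bdd (by fun_prop)
    intro ω
    rw [abs_of_pos (Real.exp_pos _)]
    apply Real.exp_le_exp.2
    calc L * X ω ≤ |L * X ω| := le_abs_self _
      _ = |L| * |X ω| := abs_mul _ _
      _ ≤ |L| * max |p| |q| := mul_le_mul_of_nonneg_left (hXb ω) (abs_nonneg L)
  rcases eq_or_lt_of_le hpq with hpq' | hpq'
  · -- degenerate case p = q
    have hXp : ∀ ω, X ω = p := fun ω => le_antisymm (hpq' ▸ (hb ω).2) (hb ω).1
    have h1 : (fun ω => Real.exp (L * X ω)) = fun _ => Real.exp (L * p) := by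
      funext ω; rw [hXp ω]
    have h2 : X = fun _ => p := funext hXp
    rw [h1, h2, integral_const, integral_const]
    simp only [measure_univ, ENNReal.toReal_one, probReal_univ, one_smul]
    exact Real.exp_le_exp.2 (by nlinarith [sq_nonneg (L * (q - p))])
  · -- main case p < q
    have hqp : (0:ℝ) < q - p := by linarith
    set A := ∫ ω, X ω ∂ν with hA
    have hAp : p ≤ A := by
      calc p = ∫ _ω, p ∂ν := by simp
        _ ≤ A := integral_mono (integrable_const p) hXint (fun ω => (hb ω).1)
    have hAq : A ≤ q := by
      calc A ≤ ∫ _ω, q ∂ν := integral_mono hXint (integrable_const q) (fun ω => (hb ω).2)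
        _ = q := by simp
    set c1 := (q * Real.exp (L * p) - p * Real.exp (L * q)) / (q - p) with hc1
    set c2 := (Real.exp (L * q) - Real.exp (L * p)) / (q - p) with hc2
    have hpt : ∀ ω, Real.exp (L * X ω) ≤ c1 + c2 * X ω := by
      intro ω
      have hx := hb ω
      have ha : (0:ℝ) ≤ (q - X ω) / (q - p) := div_nonneg (by linarith [hx.2]) hqp.le
      have hb' : (0:ℝ) ≤ (X ω - p) / (q - p) := div_nonneg (by linarith [hx.1]) hqp.le
      have hab : (q - X ω) / (q - p) + (X ω - p) / (q - p) = 1 := by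
        field_simp
        ring
      have hcv := convexOn_exp.2 (Set.mem_univ (L * p)) (Set.mem_univ (L * q)) ha hb' hab
      simp only [smul_eq_mul] at hcv
      have he : (q - X ω) / (q - p) * (L * p) + (X ω - p) / (q - p) * (L * q) = L * X ω := by
        field_simp
        ring
      rw [he] at hcv
      calc Real.exp (L * X ω) ≤ (q - X ω) / (q - p) * Real.exp (L * p)
            + (X ω - p) / (q - p) * Real.exp (L * q) := hcv
        _ = c1 + c2 * X ω := by rw [hc1, hc2]; field_simp; ring
    have hint2 : Integrable (fun ω => c1 + c2 * X ω) ν :=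
      (integrable_const c1).add (hXint.const_mul c2)
    have hmono : ∫ ω, Real.exp (L * X ω) ∂ν ≤ c1 + c2 * A := by
      calc ∫ ω, Real.exp (L * X ω) ∂ν ≤ ∫ ω, (c1 + c2 * X ω) ∂ν :=
            integral_mono hEint hint2 hpt
        _ = c1 + c2 * A := by
            rw [integral_add (integrable_const c1) (hXint.const_mul c2),
              integral_const, integral_const_mul]
            simp [hA]
    set θ := (A - p) / (q - p) with hθ
    have hθ0 : 0 ≤ θ := div_nonneg (by linarith) hqp.le
    have hθ1 : θ ≤ 1 := (div_le_one hqp).2 (by linarith)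
    have hkey := key_ineq θ (L * (q - p)) hθ0 hθ1
    have heq : c1 + c2 * A = Real.exp (L * p) * (θ * Real.exp (L * (q - p)) + (1 - θ)) := by
      have hexpq : Real.exp (L * q) = Real.exp (L * p) * Real.exp (L * (q - p)) := by
        rw [← Real.exp_add]; ring_nf
      rw [hc1, hc2, hθ, hexpq]
      field_simp
      ring
    calc ∫ ω, Real.exp (L * X ω) ∂ν ≤ c1 + c2 * A := hmono
      _ = Real.exp (L * p) * (θ * Real.exp (L * (q - p)) + (1 - θ)) := heq
      _ ≤ Real.exp (L * p) * Real.exp (θ * (L * (q - p)) + (L * (q - p)) ^ 2 / 8) :=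
          mul_le_mul_of_nonneg_left hkey (Real.exp_pos _).le
      _ = Real.exp (L * p + (θ * (L * (q - p)) + (L * (q - p)) ^ 2 / 8)) :=
          (Real.exp_add _ _).symm
      _ = Real.exp (L * A + L ^ 2 * (q - p) ^ 2 / 8) := by
          congr 1
          have h5 : θ * (q - p) = A - p := by rw [hθ]; field_simp
          linear_combination L * h5

lemma hoeffding_osc (ν : Measure Ω) [IsProbabilityMeasure ν] (X : Ω → ℝ)
    (hX : Measurable X) (c : ℝ) (hd : ∀ ω ω', X ω - X ω' ≤ c) (L : ℝ) :
    ∫ ω, Real.exp (L * X ω) ∂ν ≤ Real.exp (L * ∫ ω, X ω ∂ν + L ^ 2 * c ^ 2 / 8) := by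
  obtain ⟨ω₀⟩ := nonempty_of_prob ν
  have hbdd : BddAbove (Set.range X) := by
    refine ⟨X ω₀ + c, ?_⟩
    rintro x ⟨ω, rfl⟩
    linarith [hd ω ω₀]
  set q := sSup (Set.range X) with hq
  have hub : ∀ ω, X ω ≤ q := fun ω => le_csSup hbdd ⟨ω, rfl⟩
  have hlb : ∀ ω, q - c ≤ X ω := by
    intro ω
    have : q ≤ X ω + c := csSup_le ⟨X ω₀, ω₀, rfl⟩ (by rintro x ⟨ω', rfl⟩; linarith [hd ω' ω])
    linarith
  have := hoeffding_lemma ν X hX (q - c) q (fun ω => ⟨hlb ω, hub ω⟩) L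
  calc ∫ ω, Real.exp (L * X ω) ∂ν
      ≤ Real.exp (L * ∫ ω, X ω ∂ν + L ^ 2 * (q - (q - c)) ^ 2 / 8) := this
    _ = Real.exp (L * ∫ ω, X ω ∂ν + L ^ 2 * c ^ 2 / 8) := by ring_nf

section MGF

variable {Z : Type*} [MeasurableSpace Z] (D : Measure Z) [IsProbabilityMeasure D]

lemma mgf_pi (c M : ℝ) : ∀ (n : ℕ) (f : (Fin n → Z) → ℝ), Measurable f →
    (∀ S, |f S| ≤ M) →
    (∀ (S : Fin n → Z) (i : Fin n) (z : Z), f (Function.update S i z) - f S ≤ c) →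
    ∀ (L : ℝ),
    ∫ S, Real.exp (L * f S) ∂(Measure.pi fun _ : Fin n => D)
      ≤ Real.exp (L * ∫ S, f S ∂(Measure.pi fun _ : Fin n => D) + L ^ 2 * n * c ^ 2 / 8) := by
  intro n
  induction n with
  | zero =>
      intro f hf hM hbd L
      have hconst : ∀ S : Fin 0 → Z, f S = f Fin.elim0 := fun S => by
        congr 1; funext i; exact i.elim0
      have e1 : (∫ S, Real.exp (L * f S) ∂(Measure.pi fun _ : Fin 0 => D))
          = Real.exp (L * f Fin.elim0) := by
        rw [integral_congr_ae (g := fun _ => Real.exp (L * f Fin.elim0))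
          (Filter.Eventually.of_forall fun S => by rw [hconst S])]
        simp
      have e2 : (∫ S, f S ∂(Measure.pi fun _ : Fin 0 => D)) = f Fin.elim0 := by
        rw [integral_congr_ae (g := fun _ => f Fin.elim0)
          (Filter.Eventually.of_forall fun S => hconst S)]
        simp
      rw [e1, e2]
      norm_num
  | succ n ih =>
      intro f hf hM hbd L
      set μ' := (Measure.pi fun _ : Fin n => D) with hμ'
      set μ := (Measure.pi fun _ : Fin (n+1) => D) with hμ
      set e := MeasurableEquiv.piFinSuccAbove (fun _ : Fin (n+1) => Z) 0 with he
      have mp : MeasurePreserving e μ (D.prod μ') :=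
        measurePreserving_piFinSuccAbove (fun _ : Fin (n+1) => D) 0
      have hesymm : ∀ p : Z × (Fin n → Z), e.symm p = Fin.cons p.1 p.2 := by
        rintro ⟨z, y⟩
        show (Fin.insertNthEquiv (fun _ : Fin (n+1) => Z) 0) (z, y) = Fin.cons z y
        simp [Fin.insertNthEquiv, Fin.insertNth_zero']
      -- transfer integrals from μ to D.prod μ'
      have hcomp : ∀ (F : (Fin (n+1) → Z) → ℝ), Measurable F →
          ∫ S, F S ∂μ = ∫ p : Z × (Fin n → Z), F (Fin.cons p.1 p.2) ∂(D.prod μ') := by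
        intro F hF
        rw [← (mp.symm e).integral_comp e.symm.measurableEmbedding F]
        exact integral_congr_ae (Filter.Eventually.of_forall fun p => congrArg F (hesymm p))
      have hconsm : Measurable (fun p : Z × (Fin n → Z) => f (Fin.cons p.1 p.2)) := by
        apply hf.comp
        apply measurable_pi_iff.2
        intro i
        rcases Fin.eq_zero_or_eq_succ i with rfl | ⟨j, rfl⟩
        · simpa using measurable_fst
        · simpa [Function.comp_def] using (measurable_pi_apply j).comp measurable_snd
      have hcons1 : ∀ y : Fin n → Z, Measurable (fun z => f (Fin.cons z y)) := by
        intro y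
        exact hconsm.comp (measurable_id.prodMk measurable_const)
      have hint1 : ∀ y : Fin n → Z, Integrable (fun z => f (Fin.cons z y)) D :=
        fun y => integrable_of_bdd (hcons1 y) (fun z => hM _)
      set g : (Fin n → Z) → ℝ := fun y => ∫ z, f (Fin.cons z y) ∂D with hg
      have hgm : Measurable g := by
        have : StronglyMeasurable (fun p : (Fin n → Z) × Z => f (Fin.cons p.2 p.1)) :=
          (hconsm.comp measurable_swap).stronglyMeasurable
        exact this.integral_prod_right'.measurable
      have hgM : ∀ y, |g y| ≤ M := by
        intro y
        rw [hg]
        calc |∫ z, f (Fin.cons z y) ∂D| = ‖∫ z, f (Fin.cons z y) ∂D‖ :=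
              (Real.norm_eq_abs _).symm
          _ ≤ ∫ z, ‖f (Fin.cons z y)‖ ∂D := norm_integral_le_integral_norm _
          _ ≤ ∫ _z, M ∂D := integral_mono (hint1 y).norm (integrable_const M)
              (fun z => by simpa [Real.norm_eq_abs] using hM _)
          _ = M := by simp
      have hgbd : ∀ (y : Fin n → Z) (i : Fin n) (z : Z),
          g (Function.update y i z) - g y ≤ c := by
        intro y i z
        rw [hg]
        have h1 : ∀ w : Z, f (Fin.cons w (Function.update y i z)) - f (Fin.cons w y) ≤ c := by
          intro w
          have := hbd (Fin.cons w y) i.succ z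
          rwa [← Fin.cons_update] at this
        rw [← integral_sub]
        · calc ∫ w, (f (Fin.cons w (Function.update y i z)) - f (Fin.cons w y)) ∂D
              ≤ ∫ _w, c ∂D := integral_mono ((hint1 _).sub (hint1 y)) (integrable_const c) h1
            _ = c := by simp
        · exact hint1 _
        · exact hint1 y
      haveI hPμ' : IsProbabilityMeasure μ' := by rw [hμ']; infer_instance
      haveI hPμ : IsProbabilityMeasure μ := by rw [hμ]; infer_instance
      set K := L ^ 2 * c ^ 2 / 8 with hK
      set B := Real.exp (|L| * M) with hB
      have hexpb : ∀ x : ℝ, |x| ≤ M → |Real.exp (L * x)| ≤ B := by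
        intro x hx
        rw [abs_of_pos (Real.exp_pos _), hB]
        apply Real.exp_le_exp.2
        calc L * x ≤ |L * x| := le_abs_self _
          _ = |L| * |x| := abs_mul _ _
          _ ≤ |L| * M := mul_le_mul_of_nonneg_left hx (abs_nonneg L)
      have hfm : Measurable (fun S : Fin (n+1) → Z => Real.exp (L * f S)) :=
        Real.measurable_exp.comp (hf.const_mul L)
      have hconsm2 : Measurable (fun p : Z × (Fin n → Z) => Real.exp (L * f (Fin.cons p.1 p.2))) :=
        Real.measurable_exp.comp (hconsm.const_mul L)
      have hprodint : Integrable (fun p : Z × (Fin n → Z) =>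
          Real.exp (L * f (Fin.cons p.1 p.2))) (D.prod μ') :=
        integrable_of_bdd hconsm2 (fun p => hexpb _ (hM _))
      have hprodint2 : Integrable (fun p : Z × (Fin n → Z) => f (Fin.cons p.1 p.2)) (D.prod μ') :=
        integrable_of_bdd hconsm (fun p => hM _)
      -- step (9): ∫ g dμ' = ∫ f dμ
      have hgf : ∫ y, g y ∂μ' = ∫ S, f S ∂μ := by
        rw [hcomp f hf, integral_prod_symm _ hprodint2]
      -- step (5): inner bound
      have hinner : ∀ y : Fin n → Z, ∫ z, Real.exp (L * f (Fin.cons z y)) ∂D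
          ≤ Real.exp (L * g y + K) := by
        intro y
        apply hoeffding_osc D _ (hcons1 y) c ?_ L
        intro z z'
        have h0 := hbd (Fin.cons z' y) 0 z
        rwa [Fin.update_cons_zero] at h0
      -- integrability of the iterated inner integral
      have hconsE1 : ∀ y : Fin n → Z, Measurable (fun z => Real.exp (L * f (Fin.cons z y))) :=
        fun y => Real.measurable_exp.comp ((hcons1 y).const_mul L)
      have hconsEint : ∀ y : Fin n → Z,
          Integrable (fun z => Real.exp (L * f (Fin.cons z y))) D :=
        fun y => integrable_of_bdd (hconsE1 y) (fun z => hexpb _ (hM _))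
      have houterm : Measurable (fun y : Fin n → Z => ∫ z, Real.exp (L * f (Fin.cons z y)) ∂D) := by
        have : StronglyMeasurable (fun p : (Fin n → Z) × Z => Real.exp (L * f (Fin.cons p.2 p.1))) :=
          (hconsm2.comp measurable_swap).stronglyMeasurable
        exact this.integral_prod_right'.measurable
      have houterint : Integrable (fun y : Fin n → Z =>
          ∫ z, Real.exp (L * f (Fin.cons z y)) ∂D) μ' := by
        apply integrable_of_bdd houterm
        intro y
        calc |∫ z, Real.exp (L * f (Fin.cons z y)) ∂D|
            = ‖∫ z, Real.exp (L * f (Fin.cons z y)) ∂D‖ := (Real.norm_eq_abs _).symm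
          _ ≤ ∫ z, ‖Real.exp (L * f (Fin.cons z y))‖ ∂D :=
              norm_integral_le_integral_norm _
          _ ≤ ∫ _z, B ∂D := integral_mono (hconsEint y).norm (integrable_const B)
              (fun z => by simpa [Real.norm_eq_abs] using hexpb _ (hM (Fin.cons z y)))
          _ = B := by simp
      have hgexpint : Integrable (fun y => Real.exp (L * g y + K)) μ' :=
        integrable_of_bdd (M := B * Real.exp K)
          (Real.measurable_exp.comp ((hgm.const_mul L).add_const K))
          (fun y => by
            rw [abs_of_pos (Real.exp_pos _), Real.exp_add]
            exact mul_le_mul_of_nonneg_right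
              (by simpa [abs_of_pos (Real.exp_pos _)] using hexpb (g y) (hgM y))
              (Real.exp_pos K).le)
      -- main chain
      calc ∫ S, Real.exp (L * f S) ∂μ
          = ∫ p : Z × (Fin n → Z), Real.exp (L * f (Fin.cons p.1 p.2)) ∂(D.prod μ') :=
            hcomp _ hfm
        _ = ∫ y, ∫ z, Real.exp (L * f (Fin.cons z y)) ∂D ∂μ' :=
            integral_prod_symm _ hprodint
        _ ≤ ∫ y, Real.exp (L * g y + K) ∂μ' :=
            integral_mono houterint hgexpint hinner
        _ = Real.exp K * ∫ y, Real.exp (L * g y) ∂μ' := by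
            rw [← integral_const_mul]
            exact integral_congr_ae (Filter.Eventually.of_forall fun y => by
              show Real.exp (L * g y + K) = Real.exp K * Real.exp (L * g y)
              rw [← Real.exp_add, add_comm])
        _ ≤ Real.exp K * Real.exp (L * ∫ y, g y ∂μ' + L ^ 2 * n * c ^ 2 / 8) :=
            mul_le_mul_of_nonneg_left (ih g hgm hgM hgbd L) (Real.exp_pos _).le
        _ = Real.exp (L * ∫ S, f S ∂μ + L ^ 2 * (n + 1 : ℕ) * c ^ 2 / 8) := by
            rw [hgf, ← Real.exp_add, hK]
            congr 1
            push_cast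
            ring


lemma mcdiarmid_tail (c M : ℝ) (hc : 0 < c) (n : ℕ) (hn : 0 < n)
    (f : (Fin n → Z) → ℝ) (hf : Measurable f) (hM : ∀ S, |f S| ≤ M)
    (hbd : ∀ (S : Fin n → Z) (i : Fin n) (z : Z), f (Function.update S i z) - f S ≤ c)
    (t : ℝ) (ht : 0 < t) :
    (Measure.pi fun _ : Fin n => D)
        {S | t ≤ f S - ∫ S', f S' ∂(Measure.pi fun _ : Fin n => D)}
      ≤ ENNReal.ofReal (Real.exp (-2 * t ^ 2 / (n * c ^ 2))) := by
  set μ := (Measure.pi fun _ : Fin n => D) with hμ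
  haveI : IsProbabilityMeasure μ := by rw [hμ]; infer_instance
  set A := ∫ S', f S' ∂μ with hA
  have hnR : (0:ℝ) < n := by exact_mod_cast hn
  set L : ℝ := 4 * t / (n * c ^ 2) with hL
  have hL0 : 0 < L := by positivity
  set E := L ^ 2 * n * c ^ 2 / 8 with hE
  -- the exponential moment bound
  have hmgf := mgf_pi D c M n f hf hM hbd L
  have hshift : ∫ S, Real.exp (L * (f S - A)) ∂μ ≤ Real.exp E := by
    have heq : ∀ S : Fin n → Z, Real.exp (L * (f S - A))
        = Real.exp (-(L * A)) * Real.exp (L * f S) := by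
      intro S
      rw [← Real.exp_add]
      congr 1
      ring
    calc ∫ S, Real.exp (L * (f S - A)) ∂μ
        = ∫ S, Real.exp (-(L * A)) * Real.exp (L * f S) ∂μ :=
          integral_congr_ae (Filter.Eventually.of_forall fun S => heq S)
      _ = Real.exp (-(L * A)) * ∫ S, Real.exp (L * f S) ∂μ := integral_const_mul _ _
      _ ≤ Real.exp (-(L * A)) * Real.exp (L * A + L ^ 2 * n * c ^ 2 / 8) :=
          mul_le_mul_of_nonneg_left hmgf (Real.exp_pos _).le
      _ = Real.exp E := by rw [← Real.exp_add, hE]; ring_nf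
  have hint : Integrable (fun S => Real.exp (L * (f S - A))) μ := by
    apply integrable_of_bdd (M := Real.exp (|L| * (M + |A|)))
      (Real.measurable_exp.comp ((hf.sub_const A).const_mul L))
    intro S
    show |Real.exp (L * (f S - A))| ≤ _
    rw [abs_of_pos (Real.exp_pos _)]
    apply Real.exp_le_exp.2
    calc L * (f S - A) ≤ |L * (f S - A)| := le_abs_self _
      _ = |L| * |f S - A| := abs_mul _ _
      _ ≤ |L| * (M + |A|) := mul_le_mul_of_nonneg_left
          (le_trans (abs_sub _ _) (add_le_add (hM S) le_rfl)) (abs_nonneg L)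
  -- Markov
  set h : (Fin n → Z) → ENNReal := fun S => ENNReal.ofReal (Real.exp (L * (f S - A))) with hh
  have hhm : Measurable h :=
    ENNReal.measurable_ofReal.comp (Real.measurable_exp.comp ((hf.sub_const A).const_mul L))
  set ε := ENNReal.ofReal (Real.exp (L * t)) with hε
  have hε0 : ε ≠ 0 := by
    rw [hε]; simp [ENNReal.ofReal_eq_zero, not_le, Real.exp_pos]
  have hεt : ε ≠ ⊤ := ENNReal.ofReal_ne_top
  have hmark := mul_meas_ge_le_lintegral₀ (μ := μ) hhm.aemeasurable ε
  have hsub : {S | t ≤ f S - A} ⊆ {S | ε ≤ h S} := by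
    intro S hS
    simp only [Set.mem_setOf_eq] at hS ⊢
    rw [hε, hh]
    exact ENNReal.ofReal_le_ofReal (Real.exp_le_exp.2 (mul_le_mul_of_nonneg_left hS hL0.le))
  have hlint : ∫⁻ S, h S ∂μ = ENNReal.ofReal (∫ S, Real.exp (L * (f S - A)) ∂μ) :=
    (ofReal_integral_eq_lintegral_ofReal hint
      (Filter.Eventually.of_forall fun S => (Real.exp_pos _).le)).symm
  calc μ {S | t ≤ f S - A} ≤ μ {S | ε ≤ h S} := measure_mono hsub
    _ ≤ (∫⁻ S, h S ∂μ) / ε := by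
        rw [ENNReal.le_div_iff_mul_le (Or.inl hε0) (Or.inl hεt)]
        rw [mul_comm]
        exact hmark
    _ ≤ ENNReal.ofReal (Real.exp E) / ε := by
        apply ENNReal.div_le_div_right
        rw [hlint]
        exact ENNReal.ofReal_le_ofReal hshift
    _ = ENNReal.ofReal (Real.exp E / Real.exp (L * t)) := by
        rw [hε, ENNReal.ofReal_div_of_pos (Real.exp_pos _)]
    _ = ENNReal.ofReal (Real.exp (-2 * t ^ 2 / (n * c ^ 2))) := by
        rw [← Real.exp_sub]
        congr 1
        rw [hE, hL]
        field_simp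
        ring


end MGF

/-- Rewriting `empRad` over a class given as the range of a sequence. -/
lemma empRad_eq_range {Z : Type*} (m : ℕ) (S : Fin m → Z) (u : ℕ → Z → ℝ) :
    empRad m S (Set.range u) = ((2:ℝ)^m)⁻¹ * ∑ ε : Fin m → Bool,
      sSup (Set.range fun k => (1/(m:ℝ)) * ∑ i, (if ε i then (1:ℝ) else -1) * u k (S i)) := by
  unfold empRad radComp
  congr 1
  apply Finset.sum_congr rfl
  intro ε _
  congr 1
  rw [Set.image_image, ← Set.range_comp]
  rfl

end Aux

theorem stmt11 {Z : Type*} [MeasurableSpace Z] (D : Measure Z) [IsProbabilityMeasure D]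
    (m : ℕ) (hm : 1 ≤ m) (a b : ℝ) (hab : a < b) (G : Set (Z → ℝ)) (hG : G.Nonempty)
    (hGc : G.Countable) (hGm : ∀ g ∈ G, Measurable g)
    (hGb : ∀ g ∈ G, ∀ z, g z ∈ Set.Icc a b) (t : ℝ) (ht : 0 < t) :
    (Measure.pi fun _ : Fin m => D) {S | t ≤ |expRad m D G - empRad m S G|} ≤
      ENNReal.ofReal (2 * Real.exp (-2 * m * t ^ 2 / (b - a) ^ 2)) := by
  classical
  obtain ⟨u, hu⟩ := hGc.exists_eq_range hG
  have hum : ∀ k, Measurable (u k) := fun k => hGm _ (hu ▸ Set.mem_range_self k)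
  have hub : ∀ k z, u k z ∈ Set.Icc a b := fun k z => hGb _ (hu ▸ Set.mem_range_self k) z
  set M0 : ℝ := max |a| |b| with hM0
  have hM0nn : 0 ≤ M0 := le_trans (abs_nonneg a) (le_max_left _ _)
  have hmR : (0:ℝ) < m := by exact_mod_cast hm
  have hmne : (m:ℝ) ≠ 0 := hmR.ne'
  set μ := (Measure.pi fun _ : Fin m => D) with hμ
  haveI : IsProbabilityMeasure μ := by rw [hμ]; infer_instance
  -- sign coefficients
  set sgn : (Fin m → Bool) → Fin m → ℝ := fun ε i => if ε i then (1:ℝ) else -1 with hsgn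
  have hsgn1 : ∀ ε i, |sgn ε i| = 1 := by
    intro ε i
    rw [hsgn]
    by_cases h : ε i <;> simp [h]
  -- elementary summands
  set elem : (Fin m → Bool) → ℕ → (Fin m → Z) → ℝ :=
    fun ε k S => (1/(m:ℝ)) * ∑ i, sgn ε i * u k (S i) with helem
  have helem_bd : ∀ ε k S, |elem ε k S| ≤ M0 := by
    intro ε k S
    rw [helem]
    simp only []
    rw [abs_mul, abs_of_nonneg (by positivity : (0:ℝ) ≤ 1/(m:ℝ))]
    have h1 : |∑ i, sgn ε i * u k (S i)| ≤ (m:ℝ) * M0 := by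
      calc |∑ i, sgn ε i * u k (S i)| ≤ ∑ i, |sgn ε i * u k (S i)| :=
            Finset.abs_sum_le_sum_abs _ _
        _ ≤ ∑ _i : Fin m, M0 := Finset.sum_le_sum (fun i _ => by
            rw [abs_mul, hsgn1, one_mul]
            exact abs_le_max_abs_abs (hub k (S i)).1 (hub k (S i)).2)
        _ = (m:ℝ) * M0 := by rw [Finset.sum_const, Finset.card_univ, Fintype.card_fin,
            nsmul_eq_mul]
    calc 1/(m:ℝ) * |∑ i, sgn ε i * u k (S i)| ≤ 1/(m:ℝ) * ((m:ℝ) * M0) :=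
          mul_le_mul_of_nonneg_left h1 (by positivity)
      _ = M0 := by field_simp
  have helem_m : ∀ ε k, Measurable (fun S => elem ε k S) := by
    intro ε k
    apply Measurable.const_mul
    exact Finset.measurable_sum Finset.univ
      (fun i _ => ((hum k).comp (measurable_pi_apply i)).const_mul _)
  -- the per-sign sup
  set F : (Fin m → Bool) → (Fin m → Z) → ℝ :=
    fun ε S => sSup (Set.range fun k => elem ε k S) with hF
  have hbddF : ∀ ε S, BddAbove (Set.range fun k => elem ε k S) := by
    intro ε S
    refine ⟨M0, ?_⟩
    rintro x ⟨k, rfl⟩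
    exact (abs_le.1 (helem_bd ε k S)).2
  have hFub : ∀ ε S, F ε S ≤ M0 := by
    intro ε S
    exact csSup_le ⟨elem ε 0 S, ⟨0, rfl⟩⟩ (by rintro x ⟨k, rfl⟩; exact (abs_le.1 (helem_bd ε k S)).2)
  have hFlb : ∀ ε S, -M0 ≤ F ε S := by
    intro ε S
    exact le_trans (abs_le.1 (helem_bd ε 0 S)).1 (le_csSup (hbddF ε S) ⟨0, rfl⟩)
  have hFm : ∀ ε, Measurable (F ε) := by
    intro ε
    apply measurable_of_Iic
    intro r
    have hset : (F ε) ⁻¹' (Set.Iic r) = ⋂ k, {S | elem ε k S ≤ r} := by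
      ext S
      simp only [Set.mem_preimage, Set.mem_Iic, Set.mem_iInter, Set.mem_setOf_eq]
      constructor
      · intro h k
        exact le_trans (le_csSup (hbddF ε S) ⟨k, rfl⟩) h
      · intro h
        exact csSup_le ⟨elem ε 0 S, ⟨0, rfl⟩⟩ (by rintro x ⟨k, rfl⟩; exact h k)
    rw [hset]
    exact MeasurableSet.iInter (fun k => measurableSet_le (helem_m ε k) measurable_const)
  -- the function and its properties
  set f : (Fin m → Z) → ℝ := fun S => ((2:ℝ)^m)⁻¹ * ∑ ε : Fin m → Bool, F ε S with hf_def
  have hfeq : ∀ S, empRad m S G = f S := by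
    intro S
    rw [hu, empRad_eq_range]
  have hfm : Measurable f :=
    (Finset.measurable_sum Finset.univ (fun ε _ => hFm ε)).const_mul _
  have hcard : (Fintype.card (Fin m → Bool) : ℝ) = (2:ℝ)^m := by
    rw [Fintype.card_fun]
    simp
  have h2m : (0:ℝ) < ((2:ℝ)^m) := by positivity
  have hfM : ∀ S, |f S| ≤ M0 := by
    intro S
    rw [hf_def]
    simp only []
    rw [abs_mul, abs_of_nonneg (by positivity : (0:ℝ) ≤ ((2:ℝ)^m)⁻¹)]
    have h1 : |∑ ε : Fin m → Bool, F ε S| ≤ (2:ℝ)^m * M0 := by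
      calc |∑ ε : Fin m → Bool, F ε S| ≤ ∑ ε : Fin m → Bool, |F ε S| :=
            Finset.abs_sum_le_sum_abs _ _
        _ ≤ ∑ _ε : Fin m → Bool, M0 := Finset.sum_le_sum (fun ε _ =>
            abs_le.2 ⟨hFlb ε S, hFub ε S⟩)
        _ = (2:ℝ)^m * M0 := by
            rw [Finset.sum_const, Finset.card_univ, nsmul_eq_mul, hcard]
    calc ((2:ℝ)^m)⁻¹ * |∑ ε : Fin m → Bool, F ε S| ≤ ((2:ℝ)^m)⁻¹ * ((2:ℝ)^m * M0) :=
          mul_le_mul_of_nonneg_left h1 (by positivity)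
      _ = M0 := by field_simp
  -- bounded differences
  set c : ℝ := (b - a)/m with hc_def
  have hc0 : 0 < c := div_pos (by linarith) hmR
  have hFbd : ∀ (ε : Fin m → Bool) (S : Fin m → Z) (i : Fin m) (z : Z),
      F ε (Function.update S i z) - F ε S ≤ c := by
    intro ε S i z
    rw [sub_le_iff_le_add]
    refine csSup_le ⟨elem ε 0 (Function.update S i z), ⟨0, rfl⟩⟩ ?_
    rintro x ⟨k, rfl⟩
    have hdiff : elem ε k (Function.update S i z) - elem ε k S ≤ c := by
      rw [helem]
      simp only []
      rw [← mul_sub, ← Finset.sum_sub_distrib]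
      have hterm : ∑ j, (sgn ε j * u k (Function.update S i z j) - sgn ε j * u k (S j))
          = sgn ε i * (u k z - u k (S i)) := by
        rw [Finset.sum_eq_single i]
        · rw [Function.update_self]; ring
        · intro j _ hji
          rw [Function.update_of_ne hji]
          ring
        · intro h
          exact absurd (Finset.mem_univ i) h
      rw [hterm]
      have : sgn ε i * (u k z - u k (S i)) ≤ b - a := by
        calc sgn ε i * (u k z - u k (S i)) ≤ |sgn ε i * (u k z - u k (S i))| := le_abs_self _
          _ = |u k z - u k (S i)| := by rw [abs_mul, hsgn1, one_mul]
          _ ≤ b - a := abs_sub_le_iff.2 ⟨by linarith [(hub k z).2, (hub k (S i)).1],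
              by linarith [(hub k z).1, (hub k (S i)).2]⟩
      calc 1/(m:ℝ) * (sgn ε i * (u k z - u k (S i))) ≤ 1/(m:ℝ) * (b - a) :=
            mul_le_mul_of_nonneg_left this (by positivity)
        _ = c := by rw [hc_def]; ring
    have hle : elem ε k S ≤ F ε S := le_csSup (hbddF ε S) ⟨k, rfl⟩
    linarith
  have hfbd : ∀ (S : Fin m → Z) (i : Fin m) (z : Z),
      f (Function.update S i z) - f S ≤ c := by
    intro S i z
    rw [hf_def]
    simp only []
    rw [← mul_sub, ← Finset.sum_sub_distrib]
    calc ((2:ℝ)^m)⁻¹ * ∑ ε : Fin m → Bool, (F ε (Function.update S i z) - F ε S)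
        ≤ ((2:ℝ)^m)⁻¹ * ∑ _ε : Fin m → Bool, c := by
          apply mul_le_mul_of_nonneg_left _ (by positivity)
          exact Finset.sum_le_sum (fun ε _ => hFbd ε S i z)
      _ = c := by
          rw [Finset.sum_const, Finset.card_univ, nsmul_eq_mul, hcard]
          field_simp
  -- neg f properties
  have hnfbd : ∀ (S : Fin m → Z) (i : Fin m) (z : Z),
      (-f) (Function.update S i z) - (-f) S ≤ c := by
    intro S i z
    simp only [Pi.neg_apply, neg_sub_neg]
    have := hfbd (Function.update S i z) i (S i)
    rwa [Function.update_idem, Function.update_eq_self] at this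
  -- the two tails
  have hAf : ∫ S, f S ∂μ = expRad m D G := by
    rw [expRad, ← hμ]
    exact integral_congr_ae (Filter.Eventually.of_forall fun S => (hfeq S).symm)
  set A := expRad m D G with hA
  have htail1 : μ {S | t ≤ f S - A} ≤ ENNReal.ofReal (Real.exp (-2 * t ^ 2 / (m * c ^ 2))) := by
    have := mcdiarmid_tail D c M0 hc0 m hm f hfm hfM hfbd t ht
    rwa [← hμ, hAf] at this
  have htail2 : μ {S | t ≤ A - f S} ≤ ENNReal.ofReal (Real.exp (-2 * t ^ 2 / (m * c ^ 2))) := by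
    have := mcdiarmid_tail D c M0 hc0 m hm (-f) hfm.neg
      (fun S => by simpa using hfM S) hnfbd t ht
    rw [← hμ] at this
    have hnint : ∫ S, (-f) S ∂μ = -A := by
      rw [← hAf]
      exact integral_neg f
    rw [hnint] at this
    have hseteq : {S | t ≤ (-f) S - - A} = {S | t ≤ A - f S} := by
      ext S
      simp only [Set.mem_setOf_eq, Pi.neg_apply]
      constructor <;> intro h <;> linarith
    rwa [hseteq] at this
  -- union bound
  have hsub : {S | t ≤ |expRad m D G - empRad m S G|}
      ⊆ {S | t ≤ A - f S} ∪ {S | t ≤ f S - A} := by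
    intro S hS
    simp only [Set.mem_setOf_eq] at hS
    rw [hfeq S, ← hA] at hS
    rcases le_abs.1 hS with h | h
    · exact Or.inl h
    · exact Or.inr (by simp only [Set.mem_setOf_eq]; linarith)
  have hexp_eq : -2 * t ^ 2 / (m * c ^ 2) = -2 * m * t ^ 2 / (b - a) ^ 2 := by
    rw [hc_def]
    have hba : b - a ≠ 0 := by linarith
    field_simp
  calc μ {S | t ≤ |expRad m D G - empRad m S G|}
      ≤ μ ({S | t ≤ A - f S} ∪ {S | t ≤ f S - A}) := measure_mono hsub
    _ ≤ μ {S | t ≤ A - f S} + μ {S | t ≤ f S - A} := measure_union_le _ _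
    _ ≤ ENNReal.ofReal (Real.exp (-2 * t ^ 2 / (m * c ^ 2)))
        + ENNReal.ofReal (Real.exp (-2 * t ^ 2 / (m * c ^ 2))) := add_le_add htail2 htail1
    _ = ENNReal.ofReal (2 * Real.exp (-2 * m * t ^ 2 / (b - a) ^ 2)) := by
        rw [← ENNReal.ofReal_add (Real.exp_pos _).le (Real.exp_pos _).le, hexp_eq, two_mul]
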